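/- Let n ≥ 2 and let P(z) = ∏_{j=1}^{n}(z - z_j) be a monic polynomial whose zeros z_1, …, z_n are pairwise distinct and all lie in the closed unit disk |z| ≤ 1, with z_n = a where 0 < a < 1. Set r = (1/n)·min_{i ≠ j} |z_i - z_j|. Then P' has no zero in the set A = { z ∈ ℂ : |z| ≤ 1 and a·Re z + √(4 - a²)·Im z ≥ 2 - r²/4 }. -/

import Mathlib

open Polynomial Finset

private lemma deriv_prod_linear {ι : Type*} [DecidableEq ι] (s : Finset ι) (c : ι → ℂ) :
    Polynomial.derivative (∏ j ∈ s, (Polynomial.X - Polynomial.C (c j)))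
      = ∑ j ∈ s, ∏ k ∈ s.erase j, (Polynomial.X - Polynomial.C (c k)) := by
  classical
  induction s using Finset.induction_on with
  | empty => simp
  | @insert a s h ih =>
    rw [Finset.prod_insert h, Polynomial.derivative_mul, ih, Finset.sum_insert h,
      Finset.erase_insert h]
    simp only [Polynomial.derivative_sub, Polynomial.derivative_X, Polynomial.derivative_C,
      sub_zero, one_mul]
    rw [Finset.mul_sum]
    congr 1
    refine Finset.sum_congr rfl fun j hj => ?_
    rw [Finset.erase_insert_of_ne (fun haj : a = j => h (haj.symm ▸ hj)),
      Finset.prod_insert (fun hmem => h (Finset.mem_of_mem_erase hmem))]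


set_option maxHeartbeats 1600000 in
/-- Lemma 3 (claim): for a monic polynomial with pairwise distinct zeros in the closed
unit disk, one of which is `a ∈ (0,1)`, the derivative has no zero in
`A = { z : |z| ≤ 1 ∧ a·Re z + √(4-a²)·Im z ≥ 2 - r²/4 }`. -/
theorem stmt_6 (n : ℕ) (hn : 2 ≤ n)
    (z : Fin n → ℂ) (hinj : Function.Injective z)
    (hdisk : ∀ j, ‖z j‖ ≤ 1)
    (a : ℝ) (ha : 0 < a) (ha1 : a < 1)
    (hza : z ⟨n - 1, by omega⟩ = (a : ℝ))
    (r : ℝ)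
    (hr : IsLeast {d : ℝ | ∃ i j : Fin n, i ≠ j ∧ d = ‖z i - z j‖} ((n : ℝ) * r))
    (P : ℂ[X]) (hP : P = ∏ j : Fin n, (X - C (z j))) :
    ∀ w : ℂ, ‖w‖ ≤ 1 →
      a * w.re + Real.sqrt (4 - a ^ 2) * w.im ≥ 2 - r ^ 2 / 4 →
      (Polynomial.derivative P).eval w ≠ 0 := by
  obtain ⟨⟨i0, j0, hij0, hval⟩, hlb⟩ := hr
  have hn2 : (2:ℝ) ≤ (n:ℝ) := by exact_mod_cast hn
  have hr0 : 0 < r := by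
    have h1 : 0 < ‖z i0 - z j0‖ := by
      rw [norm_pos_iff]
      exact sub_ne_zero.mpr fun h => hij0 (hinj h)
    nlinarith
  have hr1 : r ≤ 1 := by
    have h2 : ‖z i0 - z j0‖ ≤ 2 := by
      calc ‖z i0 - z j0‖ ≤ ‖z i0‖ + ‖z j0‖ := by
            simpa [sub_eq_add_neg, norm_neg] using
              norm_add_le (z i0) (-(z j0))
        _ ≤ 2 := by have := hdisk i0; have := hdisk j0; linarith
    nlinarith [hval ▸ h2]
  have hmin : ∀ i j : Fin n, i ≠ j → (n:ℝ) * r ≤ ‖z i - z j‖ :=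
    fun i j h => hlb ⟨i, j, h, rfl⟩
  set m : Fin n := ⟨n - 1, by omega⟩ with hm
  have hDer : ∀ w : ℂ, (derivative P).eval w
      = ∑ j : Fin n, ∏ k ∈ univ.erase j, (w - z k) := by
    intro w
    rw [hP, deriv_prod_linear]
    simp [eval_finset_sum, eval_prod]
  intro w hw hH h0
  rw [hDer] at h0
  by_cases hroot : ∃ j, w = z j
  · obtain ⟨j, rfl⟩ := hroot
    have hsum : ∑ i : Fin n, ∏ k ∈ univ.erase i, (z j - z k)
        = ∏ k ∈ univ.erase j, (z j - z k) := by
      apply Finset.sum_eq_single j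
      · intro i _ hij
        exact Finset.prod_eq_zero (Finset.mem_erase.mpr ⟨hij.symm, Finset.mem_univ j⟩)
          (by simp)
      · simp
    rw [hsum] at h0
    have hne : ∏ k ∈ univ.erase j, (z j - z k) ≠ 0 := by
      rw [Finset.prod_ne_zero_iff]
      intro k hk
      exact sub_ne_zero.mpr fun h => (Finset.mem_erase.mp hk).1 (hinj h).symm
    exact hne h0
  push_neg at hroot
  have hnz : ∀ j, w - z j ≠ 0 := fun j => sub_ne_zero.mpr (hroot j)
  have hS : (∑ j : Fin n, (w - z j)⁻¹) = 0 := by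
    have hQ : (∏ k : Fin n, (w - z k)) ≠ 0 :=
      Finset.prod_ne_zero_iff.mpr fun k _ => hnz k
    have key : (∑ j : Fin n, (w - z j)⁻¹) * ∏ k : Fin n, (w - z k)
        = ∑ j : Fin n, ∏ k ∈ univ.erase j, (w - z k) := by
      rw [Finset.sum_mul]
      refine Finset.sum_congr rfl fun j _ => ?_
      rw [← Finset.mul_prod_erase univ _ (Finset.mem_univ j), ← mul_assoc,
        inv_mul_cancel₀ (hnz j), one_mul]
    have : (∑ j : Fin n, (w - z j)⁻¹) * ∏ k : Fin n, (w - z k) = 0 := key.trans h0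
    exact (mul_eq_zero.mp this).resolve_right hQ
  by_cases hclose : ∃ j, ‖w - z j‖ < r
  · -- Case 1: w is very close to some zero
    obtain ⟨j₀, hj₀⟩ := hclose
    set t := ‖w - z j₀‖ with htdef
    have ht0 : 0 < t := norm_pos_iff.mpr (hnz j₀)
    have hd : 0 < (n:ℝ) * r - t := by nlinarith
    have hfar : ∀ k ∈ univ.erase j₀,
        ‖(w - z k)⁻¹‖ ≤ ((n:ℝ) * r - t)⁻¹ := by
      intro k hk
      have hkj : k ≠ j₀ := (Finset.mem_erase.mp hk).1
      have h1 : (n:ℝ) * r ≤ ‖z k - z j₀‖ := hmin k j₀ hkj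
      have h2 : ‖z k - z j₀‖
          ≤ ‖z k - w‖ + ‖w - z j₀‖ := by
        simpa [dist_eq_norm] using dist_triangle (z k) w (z j₀)
      have h3 : (n:ℝ) * r - t ≤ ‖w - z k‖ := by
        have h2' : ‖z k - w‖ = ‖w - z k‖ :=
          norm_sub_rev _ _
        linarith
      rw [norm_inv]
      exact inv_anti₀ hd h3
    have hsplit : (w - z j₀)⁻¹ = -∑ k ∈ univ.erase j₀, (w - z k)⁻¹ := by
      have h4 := Finset.add_sum_erase univ (fun k => (w - z k)⁻¹) (Finset.mem_univ j₀)
      rw [hS] at h4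
      linear_combination h4
    have habs : t⁻¹ ≤ ((n:ℝ) - 1) * ((n:ℝ) * r - t)⁻¹ := by
      have h5 : ‖(w - z j₀)⁻¹‖ = t⁻¹ := by rw [norm_inv]
      calc t⁻¹ = ‖∑ k ∈ univ.erase j₀, (w - z k)⁻¹‖ := by
            rw [← h5, hsplit, norm_neg]
        _ ≤ ∑ k ∈ univ.erase j₀, ‖(w - z k)⁻¹‖ :=
            norm_sum_le _ _
        _ ≤ (univ.erase j₀).card • (((n:ℝ) * r - t)⁻¹) :=
            Finset.sum_le_card_nsmul _ _ _ hfar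
        _ = ((n:ℝ) - 1) * ((n:ℝ) * r - t)⁻¹ := by
            rw [Finset.card_erase_of_mem (Finset.mem_univ j₀), Finset.card_univ,
              Fintype.card_fin, nsmul_eq_mul, Nat.cast_sub (by omega), Nat.cast_one]
    -- derive contradiction
    have hc : (n:ℝ) * r - t ≤ ((n:ℝ) - 1) * t := by
      have h6 := mul_le_mul_of_nonneg_left habs (le_of_lt (mul_pos ht0 hd))
      rw [show t * ((n:ℝ)*r - t) * t⁻¹ = ((n:ℝ)*r - t) * (t * t⁻¹) by ring,
        mul_inv_cancel₀ ht0.ne', mul_one] at h6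
      rw [show t * ((n:ℝ)*r - t) * (((n:ℝ) - 1) * ((n:ℝ)*r - t)⁻¹)
          = ((n:ℝ) - 1) * t * (((n:ℝ)*r - t) * ((n:ℝ)*r - t)⁻¹) by ring,
        mul_inv_cancel₀ hd.ne', mul_one] at h6
      linarith
    nlinarith
  · -- Case 2: all zeros at distance ≥ r from w
    push_neg at hclose
    set s := Real.sqrt (4 - a ^ 2) with hsdef
    have hs2 : s ^ 2 = 4 - a ^ 2 := Real.sq_sqrt (by nlinarith)
    have hs0 : 0 ≤ s := Real.sqrt_nonneg _
    set u : ℂ := ⟨a / 2, s / 2⟩ with hu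
    have hure : u.re = a / 2 := rfl
    have huim : u.im = s / 2 := rfl
    have hw2 : w.re ^ 2 + w.im ^ 2 ≤ 1 := by
      have := Complex.sq_norm w
      nlinarith [Complex.sq_norm w, Complex.normSq_apply w, hw, norm_nonneg w]
    have hwu : ‖w - u‖ ≤ r / 2 := by
      have h7 : Complex.normSq (w - u) ≤ (r / 2) ^ 2 := by
        simp only [Complex.normSq_apply, Complex.sub_re, Complex.sub_im, hure, huim]
        nlinarith
      rw [Complex.norm_def]
      calc Real.sqrt (Complex.normSq (w - u)) ≤ Real.sqrt ((r/2)^2) :=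
            Real.sqrt_le_sqrt h7
        _ = r / 2 := Real.sqrt_sq (by linarith)
    have hNnn : ∀ j : Fin n,
        0 ≤ u.re * (w - z j).re + u.im * (w - z j).im := by
      intro j
      have hdz : r / 2 ≤ ‖u - z j‖ := by
        have h8 : ‖w - z j‖ ≤ ‖w - u‖ + ‖u - z j‖ :=
          by simpa [dist_eq_norm] using dist_triangle w u (z j)
        have := hclose j
        linarith
      have hdz2 : (r/2)^2 ≤ Complex.normSq (u - z j) := by
        rw [← Complex.sq_norm]
        exact pow_le_pow_left₀ (by linarith) hdz 2
      have hzj : (z j).re ^ 2 + (z j).im ^ 2 ≤ 1 := by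
        nlinarith [Complex.sq_norm (z j), Complex.normSq_apply (z j), hdisk j,
          norm_nonneg (z j)]
      simp only [Complex.normSq_apply, Complex.sub_re, Complex.sub_im, hure, huim] at hdz2 ⊢
      nlinarith [hdz2, hzj, hH, hs2]
    have hNm : 0 < u.re * (w - z m).re + u.im * (w - z m).im := by
      rw [hza]
      simp only [Complex.sub_re, Complex.sub_im, Complex.ofReal_re, Complex.ofReal_im,
        hure, huim]
      nlinarith
    have hT : ∑ j : Fin n,
        (u.re * ((w - z j)⁻¹).re - u.im * ((w - z j)⁻¹).im) = 0 := by
      rw [Finset.sum_sub_distrib, ← Finset.mul_sum, ← Finset.mul_sum,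
        ← Complex.re_sum, ← Complex.im_sum, hS]
      simp
    have hTpos : 0 < ∑ j : Fin n,
        (u.re * ((w - z j)⁻¹).re - u.im * ((w - z j)⁻¹).im) := by
      have hterm : ∀ j : Fin n,
          u.re * ((w - z j)⁻¹).re - u.im * ((w - z j)⁻¹).im
          = (u.re * (w - z j).re + u.im * (w - z j).im) / Complex.normSq (w - z j) := by
        intro j
        rw [Complex.inv_re, Complex.inv_im]
        ring
      apply Finset.sum_pos'
      · intro j _
        rw [hterm j]
        exact div_nonneg (hNnn j) (Complex.normSq_nonneg _)
      · refine ⟨m, Finset.mem_univ m, ?_⟩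
        rw [hterm m]
        exact div_pos hNm (Complex.normSq_pos.mpr (hnz m))
    exact hTpos.ne' hT
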